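/- arXiv:1309.3452 — 5 statements merged into one kernel-verified Lean document; each statement's English description precedes it below -/
import Mathlib

section
/- Let X(k) = sqrt((M² + P²)/(M² + (2ħ/Δt)²)) where M = mc², P² = c²Σ_j (2ħ/Δ_j)² sin²(k_jΔ_j/2) for j = x,y,z. If Δ_o = cΔt and r_j = Δ_o/Δ_j satisfy r_x² + r_y² + r_z² ≤ 1, then X(k) ≤ 1 for all real k, so that ω = ±(2/Δt) arcsin(X(k)) is real. -/
open Real

/-- Reality of the (3+1)D lattice dispersion: if `r_x² + r_y² + r_z² ≤ 1` with
`r_j = cΔt/Δ_j`, then `X(k) ≤ 1` for all real wave vectors `k`, so that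
`ω = ±(2/Δt) arcsin(X(k))` is real. -/
theorem stmt_3 (m c hbar Δt Δx Δy Δz : ℝ)
    (hm : 0 ≤ m) (hc : 0 < c) (hbar_pos : 0 < hbar) (hΔt : 0 < Δt)
    (hΔx : 0 < Δx) (hΔy : 0 < Δy) (hΔz : 0 < Δz)
    (hr : (c * Δt / Δx) ^ 2 + (c * Δt / Δy) ^ 2 + (c * Δt / Δz) ^ 2 ≤ 1)
    (kx ky kz : ℝ) :
    Real.sqrt (((m * c ^ 2) ^ 2
        + c ^ 2 * ((2 * hbar / Δx * Real.sin (kx * Δx / 2)) ^ 2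
          + (2 * hbar / Δy * Real.sin (ky * Δy / 2)) ^ 2
          + (2 * hbar / Δz * Real.sin (kz * Δz / 2)) ^ 2))
      / ((m * c ^ 2) ^ 2 + (2 * hbar / Δt) ^ 2)) ≤ 1 := by
  have hB : (0:ℝ) < (m * c ^ 2) ^ 2 + (2 * hbar / Δt) ^ 2 := by positivity
  rw [show (1:ℝ) = Real.sqrt 1 by simp]
  apply Real.sqrt_le_sqrt
  rw [div_le_one hB]
  have sx := Real.sin_sq_le_one (kx * Δx / 2)
  have sy := Real.sin_sq_le_one (ky * Δy / 2)
  have sz := Real.sin_sq_le_one (kz * Δz / 2)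
  have hx : (0:ℝ) ≤ Real.sin (kx * Δx / 2) ^ 2 := sq_nonneg _
  have hy : (0:ℝ) ≤ Real.sin (ky * Δy / 2) ^ 2 := sq_nonneg _
  have hz : (0:ℝ) ≤ Real.sin (kz * Δz / 2) ^ 2 := sq_nonneg _
  have hxi : (0:ℝ) < (2 * hbar / Δx) ^ 2 := by positivity
  have hyi : (0:ℝ) < (2 * hbar / Δy) ^ 2 := by positivity
  have hzi : (0:ℝ) < (2 * hbar / Δz) ^ 2 := by positivity
  have key : c ^ 2 * ((2 * hbar / Δx) ^ 2 + (2 * hbar / Δy) ^ 2 + (2 * hbar / Δz) ^ 2)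
      ≤ (2 * hbar / Δt) ^ 2 := by
    have h := mul_le_mul_of_nonneg_left hr (by positivity : (0:ℝ) ≤ (2 * hbar / Δt) ^ 2)
    have e : (2 * hbar / Δt) ^ 2 * ((c * Δt / Δx) ^ 2 + (c * Δt / Δy) ^ 2 + (c * Δt / Δz) ^ 2)
        = c ^ 2 * ((2 * hbar / Δx) ^ 2 + (2 * hbar / Δy) ^ 2 + (2 * hbar / Δz) ^ 2) := by
      field_simp
    linarith [e ▸ h]
  have expand : ∀ a s : ℝ, (a * s) ^ 2 = a ^ 2 * s ^ 2 := fun a s => mul_pow a s 2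
  nlinarith [mul_le_mul_of_nonneg_left sx hxi.le, mul_le_mul_of_nonneg_left sy hyi.le,
    mul_le_mul_of_nonneg_left sz hzi.le, mul_pow (2 * hbar / Δx) (Real.sin (kx * Δx / 2)) 2,
    mul_pow (2 * hbar / Δy) (Real.sin (ky * Δy / 2)) 2,
    mul_pow (2 * hbar / Δz) (Real.sin (kz * Δz / 2)) 2, sq_nonneg c, hc.le]
end

section
/- For the (2+1)D case: with P² = c²[(2ħ/Δ_x)² sin²(k_xΔ_x/2) + (2ħ/Δ_y)² sin²(k_yΔ_y/2)] and M = mc², the quantity X(k) = sqrt((M² + P²)/(M² + (2ħc/Δ_o)²)) satisfies X(k) ≤ 1 for all k whenever (Δ_o/Δ_x)² + (Δ_o/Δ_y)² ≤ 1. -/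
open Real

/-- Reality (stability) condition for the (2+1)D staggered-grid Dirac scheme:
`X(k) ≤ 1` for all `k` whenever `(Δ_o/Δ_x)² + (Δ_o/Δ_y)² ≤ 1`, with `Δ_o = cΔt`. -/
theorem stmt_4 (m c hbar Δo Δx Δy : ℝ)
    (hm : 0 ≤ m) (hc : 0 < c) (hbar_pos : 0 < hbar)
    (hΔo : 0 < Δo) (hΔx : 0 < Δx) (hΔy : 0 < Δy)
    (hr : (Δo / Δx) ^ 2 + (Δo / Δy) ^ 2 ≤ 1)
    (kx ky : ℝ) :
    Real.sqrt (((m * c ^ 2) ^ 2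
        + c ^ 2 * ((2 * hbar / Δx * Real.sin (kx * Δx / 2)) ^ 2
          + (2 * hbar / Δy * Real.sin (ky * Δy / 2)) ^ 2))
      / ((m * c ^ 2) ^ 2 + (2 * hbar * c / Δo) ^ 2)) ≤ 1 := by
  have hB : (0:ℝ) < (m * c ^ 2) ^ 2 + (2 * hbar * c / Δo) ^ 2 := by positivity
  rw [Real.sqrt_le_one]
  rw [div_le_one hB]
  have hsx : Real.sin (kx * Δx / 2) ^ 2 ≤ 1 := Real.sin_sq_le_one _
  have hsy : Real.sin (ky * Δy / 2) ^ 2 ≤ 1 := Real.sin_sq_le_one _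
  have hx2 : (0:ℝ) < Δx ^ 2 := by positivity
  have hy2 : (0:ℝ) < Δy ^ 2 := by positivity
  have ho2 : (0:ℝ) < Δo ^ 2 := by positivity
  have hr' : Δo ^ 2 * Δy ^ 2 + Δo ^ 2 * Δx ^ 2 ≤ Δx ^ 2 * Δy ^ 2 := by
    have := hr
    rw [div_pow, div_pow, div_add_div _ _ (ne_of_gt hx2) (ne_of_gt hy2),
      div_le_one (by positivity)] at this
    linarith [this]
  have key : (2 * hbar / Δx * Real.sin (kx * Δx / 2)) ^ 2
      + (2 * hbar / Δy * Real.sin (ky * Δy / 2)) ^ 2 ≤ (2 * hbar / Δo) ^ 2 := by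
    have e1 : (2 * hbar / Δx * Real.sin (kx * Δx / 2)) ^ 2
        = (2 * hbar) ^ 2 * Real.sin (kx * Δx / 2) ^ 2 / Δx ^ 2 := by ring
    have e2 : (2 * hbar / Δy * Real.sin (ky * Δy / 2)) ^ 2
        = (2 * hbar) ^ 2 * Real.sin (ky * Δy / 2) ^ 2 / Δy ^ 2 := by ring
    have e3 : (2 * hbar / Δo) ^ 2 = (2 * hbar) ^ 2 / Δo ^ 2 := by ring
    rw [e1, e2, e3, div_add_div _ _ (ne_of_gt hx2) (ne_of_gt hy2),
      div_le_div_iff₀ (by positivity) ho2]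
    nlinarith [sq_nonneg (2 * hbar), sq_nonneg (Real.sin (kx * Δx / 2)),
      sq_nonneg (Real.sin (ky * Δy / 2)), mul_pos hx2 hy2, mul_pos ho2 hy2, mul_pos ho2 hx2,
      mul_nonneg (mul_nonneg (sq_nonneg (2*hbar)) ho2.le) (sub_nonneg.mpr hsx),
      mul_nonneg (mul_nonneg (sq_nonneg (2*hbar)) ho2.le) (sub_nonneg.mpr hsy)]
  have heq : (2 * hbar * c / Δo) ^ 2 = c ^ 2 * (2 * hbar / Δo) ^ 2 := by ring
  have := mul_le_mul_of_nonneg_left key (sq_nonneg c)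
  linarith
end

section
/- The lattice dispersion function E(k) = sqrt(m²c⁴ + Σ_j c²(2ħ/Δ_j)² sin²(k_jΔ_j/2)) with m = 0 vanishes on the Brillouin zone (−π/Δ_x, π/Δ_x] × (−π/Δ_y, π/Δ_y] × (−π/Δ_z, π/Δ_z] only at k = 0 (single Dirac cone, no fermion doubling). -/
open Real

lemma sin_zero_iff_k_zero (Δ k : ℝ) (hΔ : 0 < Δ)
    (h1 : -(π / Δ) < k) (h2 : k ≤ π / Δ) :
    Real.sin (k * Δ / 2) = 0 ↔ k = 0 := by
  constructor
  · intro hs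
    have hlt : -π < k * Δ / 2 := by
      have hq : -(π / Δ) * Δ < k * Δ := mul_lt_mul_of_pos_right h1 hΔ
      rw [neg_mul, div_mul_cancel₀ _ hΔ.ne'] at hq
      nlinarith [Real.pi_pos]
    have hlt2 : k * Δ / 2 < π := by
      have hq : k * Δ ≤ (π / Δ) * Δ := mul_le_mul_of_nonneg_right h2 hΔ.le
      rw [div_mul_cancel₀ _ hΔ.ne'] at hq
      nlinarith [Real.pi_pos]
    have hzz := (Real.sin_eq_zero_iff_of_lt_of_lt hlt hlt2).mp hs
    have hz' : k * Δ = 0 := by linarith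
    rcases mul_eq_zero.mp hz' with h | h
    · exact h
    · exact absurd h hΔ.ne'
  · intro h; simp [h]

/-- Single Dirac cone / no fermion doubling: the massless lattice dispersion
`E(k) = sqrt(Σ_j c²(2ħ/Δ_j)² sin²(k_jΔ_j/2))` vanishes on the Brillouin zone
`(−π/Δ_x, π/Δ_x] × (−π/Δ_y, π/Δ_y] × (−π/Δ_z, π/Δ_z]` only at `k = 0`. -/
theorem stmt_5 (c hbar Δx Δy Δz : ℝ)
    (hc : 0 < c) (hbar_pos : 0 < hbar) (hΔx : 0 < Δx) (hΔy : 0 < Δy) (hΔz : 0 < Δz)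
    (kx ky kz : ℝ)
    (hkx₁ : -(π / Δx) < kx) (hkx₂ : kx ≤ π / Δx)
    (hky₁ : -(π / Δy) < ky) (hky₂ : ky ≤ π / Δy)
    (hkz₁ : -(π / Δz) < kz) (hkz₂ : kz ≤ π / Δz) :
    Real.sqrt (c ^ 2 * (2 * hbar / Δx) ^ 2 * Real.sin (kx * Δx / 2) ^ 2
      + c ^ 2 * (2 * hbar / Δy) ^ 2 * Real.sin (ky * Δy / 2) ^ 2
      + c ^ 2 * (2 * hbar / Δz) ^ 2 * Real.sin (kz * Δz / 2) ^ 2) = 0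
    ↔ (kx = 0 ∧ ky = 0 ∧ kz = 0) := by
  have hx := sin_zero_iff_k_zero Δx kx hΔx hkx₁ hkx₂
  have hy := sin_zero_iff_k_zero Δy ky hΔy hky₁ hky₂
  have hz := sin_zero_iff_k_zero Δz kz hΔz hkz₁ hkz₂
  have cx : 0 < c ^ 2 * (2 * hbar / Δx) ^ 2 := by positivity
  have cy : 0 < c ^ 2 * (2 * hbar / Δy) ^ 2 := by positivity
  have cz : 0 < c ^ 2 * (2 * hbar / Δz) ^ 2 := by positivity
  constructor
  · intro h
    have hnn : 0 ≤ c ^ 2 * (2 * hbar / Δx) ^ 2 * Real.sin (kx * Δx / 2) ^ 2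
      + c ^ 2 * (2 * hbar / Δy) ^ 2 * Real.sin (ky * Δy / 2) ^ 2
      + c ^ 2 * (2 * hbar / Δz) ^ 2 * Real.sin (kz * Δz / 2) ^ 2 := by positivity
    have h0 := (Real.sqrt_eq_zero hnn).mp h
    have tx : c ^ 2 * (2 * hbar / Δx) ^ 2 * Real.sin (kx * Δx / 2) ^ 2 = 0 := by
      have n1 : 0 ≤ c ^ 2 * (2 * hbar / Δx) ^ 2 * Real.sin (kx * Δx / 2) ^ 2 := by positivity
      have n2 : 0 ≤ c ^ 2 * (2 * hbar / Δy) ^ 2 * Real.sin (ky * Δy / 2) ^ 2 := by positivity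
      have n3 : 0 ≤ c ^ 2 * (2 * hbar / Δz) ^ 2 * Real.sin (kz * Δz / 2) ^ 2 := by positivity
      linarith
    have ty : c ^ 2 * (2 * hbar / Δy) ^ 2 * Real.sin (ky * Δy / 2) ^ 2 = 0 := by
      have n1 : 0 ≤ c ^ 2 * (2 * hbar / Δx) ^ 2 * Real.sin (kx * Δx / 2) ^ 2 := by positivity
      have n2 : 0 ≤ c ^ 2 * (2 * hbar / Δy) ^ 2 * Real.sin (ky * Δy / 2) ^ 2 := by positivity
      have n3 : 0 ≤ c ^ 2 * (2 * hbar / Δz) ^ 2 * Real.sin (kz * Δz / 2) ^ 2 := by positivity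
      linarith
    have tz : c ^ 2 * (2 * hbar / Δz) ^ 2 * Real.sin (kz * Δz / 2) ^ 2 = 0 := by
      have n1 : 0 ≤ c ^ 2 * (2 * hbar / Δx) ^ 2 * Real.sin (kx * Δx / 2) ^ 2 := by positivity
      have n2 : 0 ≤ c ^ 2 * (2 * hbar / Δy) ^ 2 * Real.sin (ky * Δy / 2) ^ 2 := by positivity
      have n3 : 0 ≤ c ^ 2 * (2 * hbar / Δz) ^ 2 * Real.sin (kz * Δz / 2) ^ 2 := by positivity
      linarith
    have sx : Real.sin (kx * Δx / 2) ^ 2 = 0 := by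
      rcases mul_eq_zero.mp tx with h' | h'
      · exact absurd h' cx.ne'
      · exact h'
    have sy : Real.sin (ky * Δy / 2) ^ 2 = 0 := by
      rcases mul_eq_zero.mp ty with h' | h'
      · exact absurd h' cy.ne'
      · exact h'
    have sz : Real.sin (kz * Δz / 2) ^ 2 = 0 := by
      rcases mul_eq_zero.mp tz with h' | h'
      · exact absurd h' cz.ne'
      · exact h'
    exact ⟨hx.mp (pow_eq_zero_iff two_ne_zero |>.mp sx),
      hy.mp (pow_eq_zero_iff two_ne_zero |>.mp sy),
      hz.mp (pow_eq_zero_iff two_ne_zero |>.mp sz)⟩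
  · rintro ⟨h1, h2, h3⟩
    simp [h1, h2, h3]
end

section
/- The averaged quantity ‖ũ‖² := Σ_j |(u_{j+e_x} − i u_{j+e_x/2+e_y/2} + u_j − i u_{j+e_x/2−e_y/2})/(2√2)|², with the sum over j ∈ ℤ² ∪ (ℤ+1/2)², defines a norm on ℓ²(ℤ² ∪ (ℤ+1/2)²; ℂ): in particular ‖ũ‖ = 0 implies u = 0. -/
noncomputable section
open Complex

/-- The face-centered lattice `ℤ² ∪ (ℤ+1/2)²`, encoded in half-unit coordinates as the
points of `ℤ²` with even coordinate sum.  A shift by `(1,1)` is the shift `e_x/2 + e_y/2`,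
and `(2,0)` is `e_x`. -/
def FCLat : Type := {j : ℤ × ℤ // Even (j.1 + j.2)}

namespace Stmt11Aux

open Filter

lemma tsum_shiftR (g : ℤ → ℝ) (k : ℤ) : ∑' n, g (n + k) = ∑' n, g n :=
  (Equiv.addRight k).tsum_eq g

lemma tsum_shiftC (g : ℤ → ℂ) (k : ℤ) : ∑' n, g (n + k) = ∑' n, g n :=
  (Equiv.addRight k).tsum_eq g

lemma summable_shift {g : ℤ → ℝ} (h : Summable g) (k : ℤ) : Summable fun n => g (n + k) :=
  ((Equiv.addRight k).summable_iff).2 h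

lemma norm_conj_mul_le (x y : ℂ) :
    ‖(starRingEnd ℂ) x * y‖ ≤ (‖x‖ ^ 2 + ‖y‖ ^ 2) / 2 := by
  rw [norm_mul, RCLike.norm_conj]
  nlinarith [sq_nonneg (‖x‖ - ‖y‖), norm_nonneg x, norm_nonneg y]

lemma summable_cm {x : ℤ → ℂ} (hx : Summable fun n => ‖x n‖ ^ 2) (p q : ℤ) :
    Summable fun n => (starRingEnd ℂ) (x (n + p)) * x (n + q) := by
  refine Summable.of_norm ?_
  refine Summable.of_nonneg_of_le (fun n => norm_nonneg _)
    (fun n => norm_conj_mul_le _ _) ?_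
  exact ((summable_shift hx p).add (summable_shift hx q)).div_const 2

lemma summable_cm0 {x : ℤ → ℂ} (hx : Summable fun n => ‖x n‖ ^ 2) (q : ℤ) :
    Summable fun n => (starRingEnd ℂ) (x n) * x (n + q) := by
  have := summable_cm hx 0 q
  simpa using this

/-- `N`, the squared ℓ² norm. -/
def Nq (x : ℤ → ℂ) : ℝ := ∑' n, ‖x n‖ ^ 2

def c1 (x : ℤ → ℂ) : ℂ := ∑' n, (starRingEnd ℂ) (x n) * x (n + 1)

def c2 (x : ℤ → ℂ) : ℂ := ∑' n, (starRingEnd ℂ) (x n) * x (n + 2)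

lemma norm_c_le {x : ℤ → ℂ} (hx : Summable fun n => ‖x n‖ ^ 2) (k : ℤ) :
    ‖∑' n, (starRingEnd ℂ) (x n) * x (n + k)‖ ≤ Nq x := by
  have h1 : Summable fun n => ‖(starRingEnd ℂ) (x n) * x (n + k)‖ := by
    refine Summable.of_nonneg_of_le (fun n => norm_nonneg _)
      (fun n => norm_conj_mul_le _ _) ?_
    exact (hx.add (summable_shift hx k)).div_const 2
  calc ‖∑' n, (starRingEnd ℂ) (x n) * x (n + k)‖
      ≤ ∑' n, ‖(starRingEnd ℂ) (x n) * x (n + k)‖ := norm_tsum_le_tsum_norm h1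
    _ ≤ ∑' n, (‖x n‖ ^ 2 + ‖x (n + k)‖ ^ 2) / 2 := by
        refine Summable.tsum_le_tsum (fun n => norm_conj_mul_le _ _) h1 ?_
        exact (hx.add (summable_shift hx k)).div_const 2
    _ = (Nq x + Nq x) / 2 := by
        rw [tsum_div_const, Summable.tsum_add hx (summable_shift hx k), tsum_shiftR (fun n => ‖x n‖ ^ 2) k]
        rfl
    _ = Nq x := by ring

lemma conj_mul_self (z : ℂ) : (starRingEnd ℂ) z * z = ((‖z‖ ^ 2 : ℝ) : ℂ) := by
  rw [mul_comm, Complex.mul_conj]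
  norm_cast
  rw [Complex.normSq_eq_norm_sq]

lemma expand {x : ℤ → ℂ} (hx : Summable fun n => ‖x n‖ ^ 2) (α β : ℂ) :
    ∑' n, (starRingEnd ℂ) (α * x n + β * x (n + 1)) * (α * x (n + 1) + β * x (n + 2))
      = ((starRingEnd ℂ) α * α + (starRingEnd ℂ) β * β) * c1 x
        + (starRingEnd ℂ) α * β * c2 x + (starRingEnd ℂ) β * α * (Nq x : ℂ) := by
  have hidx : ∀ n : ℤ, n + 1 + 1 = n + 2 := fun n => by ring
  have e1 : ∀ n : ℤ,
      (starRingEnd ℂ) (α * x n + β * x (n + 1)) * (α * x (n + 1) + β * x (n + 2))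
        = (starRingEnd ℂ) α * α * ((starRingEnd ℂ) (x n) * x (n + 1))
          + (starRingEnd ℂ) α * β * ((starRingEnd ℂ) (x n) * x (n + 2))
          + ((starRingEnd ℂ) β * α * ((starRingEnd ℂ) (x (n + 1)) * x (n + 1))
          + (starRingEnd ℂ) β * β * ((starRingEnd ℂ) (x (n + 1)) * x (n + 2))) := by
    intro n
    simp only [map_add, map_mul]
    ring
  rw [tsum_congr e1]
  have s1 := summable_cm0 hx 1
  have s2 := summable_cm0 hx 2
  have s3 : Summable fun n : ℤ => (starRingEnd ℂ) (x (n + 1)) * x (n + 1) := by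
    have := summable_cm hx 1 1; simpa using this
  have s4 : Summable fun n : ℤ => (starRingEnd ℂ) (x (n + 1)) * x (n + 2) := by
    have := summable_cm hx 1 2; simpa using this
  rw [Summable.tsum_add ((s1.mul_left _).add (s2.mul_left _)) ((s3.mul_left _).add (s4.mul_left _)),
      Summable.tsum_add (s1.mul_left _) (s2.mul_left _), Summable.tsum_add (s3.mul_left _) (s4.mul_left _),
      tsum_mul_left, tsum_mul_left, tsum_mul_left, tsum_mul_left]
  have t3 : (∑' n : ℤ, (starRingEnd ℂ) (x (n + 1)) * x (n + 1)) = (Nq x : ℂ) := by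
    have : (∑' n : ℤ, (starRingEnd ℂ) (x (n + 1)) * x (n + 1))
        = ∑' n : ℤ, ((‖x (n + 1)‖ ^ 2 : ℝ) : ℂ) := by
      exact tsum_congr fun n => conj_mul_self _
    rw [this, ← Complex.ofReal_tsum, tsum_shiftR (fun n => ‖x n‖ ^ 2) 1]
    rfl
  have t4 : (∑' n : ℤ, (starRingEnd ℂ) (x (n + 1)) * x (n + 2)) = c1 x := by
    have h := tsum_shiftC (fun n => (starRingEnd ℂ) (x n) * x (n + 1)) 1
    simp only [hidx] at h
    exact h
  rw [t3, t4]
  show _ = _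
  unfold c1 c2
  ring

/-- The key identity coming from the lattice equation. -/
lemma key {x y : ℤ → ℂ} (hx : Summable fun n => ‖x n‖ ^ 2)
    (hy : Summable fun n => ‖y n‖ ^ 2)
    (heq : ∀ n : ℤ, y (n + 1) - I * y n + x n - I * x (n + 1) = 0) :
    2 * (c1 y).im + (c2 y).re - Nq y = 2 * (c1 x).im - (c2 x).re + Nq x := by
  have hb : ∀ n : ℤ, (1 : ℂ) * y n + I * y (n + 1) = (-I) * x n + (-1) * x (n + 1) := by
    intro n
    have h := heq n
    have hI : (I : ℂ) * I = -1 := Complex.I_mul_I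
    linear_combination I * h + (y n + x (n + 1)) * hI
  have hA := expand hy 1 I
  have hB := expand hx (-I) (-1)
  have hT : (∑' n : ℤ, (starRingEnd ℂ) ((1:ℂ) * y n + I * y (n + 1))
        * ((1:ℂ) * y (n + 1) + I * y (n + 2)))
      = ∑' n : ℤ, (starRingEnd ℂ) ((-I) * x n + (-1) * x (n + 1))
        * ((-I) * x (n + 1) + (-1) * x (n + 2)) := by
    refine tsum_congr fun n => ?_
    have h1 := hb n
    have h2 := hb (n + 1)
    simp only [show n + 1 + 1 = n + 2 from by ring] at h2
    rw [h1, h2]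
  rw [hA, hB] at hT
  have hcI : (starRingEnd ℂ) I = -I := Complex.conj_I
  have hc1 : (starRingEnd ℂ) (1 : ℂ) = 1 := by simp
  have hcnI : (starRingEnd ℂ) (-I) = I := by simp
  have hcn1 : (starRingEnd ℂ) (-1 : ℂ) = -1 := by simp
  rw [hcI, hc1, hcnI, hcn1] at hT
  have hT2 : (2 : ℂ) * c1 y + I * c2 y - I * (Nq y : ℂ)
      = 2 * c1 x - I * c2 x + I * (Nq x : ℂ) := by
    have hI : (I : ℂ) * I = -1 := Complex.I_mul_I
    linear_combination hT + (c1 y - c1 x) * hI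
  have := congrArg Complex.im hT2
  simpa [Complex.add_im, Complex.sub_im, Complex.mul_im, Complex.mul_re] using this

end Stmt11Aux

open Stmt11Aux Filter

/-- The grid-averaged quantity `‖ũ‖²` is a norm on `ℓ²` of the face-centered lattice:
if `‖ũ‖ = 0` then `u = 0`. -/
theorem stmt_11 (u : ℤ × ℤ → ℂ) (hu : Memℓp u 2)
    (hvan : ∀ j : ℤ × ℤ, ¬ Even (j.1 + j.2) → u j = 0)
    (hnorm : ∑' j : FCLat,
        ‖(u (j.1.1 + 2, j.1.2) - Complex.I * u (j.1.1 + 1, j.1.2 + 1)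
            + u j.1 - Complex.I * u (j.1.1 + 1, j.1.2 - 1)) / (2 * Real.sqrt 2)‖ ^ 2 = 0) :
    u = 0 := by
  classical
  -- global ℓ² summability
  have hs2 : Summable fun j : ℤ × ℤ => ‖u j‖ ^ 2 := by
    have h := hu.summable (p := 2) (by norm_num)
    have h2 : ∀ i : ℤ × ℤ, ‖u i‖ ^ ENNReal.toReal 2 = ‖u i‖ ^ 2 := by
      intro i
      rw [show ENNReal.toReal 2 = ((2 : ℕ) : ℝ) from by norm_num, Real.rpow_natCast]
    exact (summable_congr h2).1 h
  -- diagonal coordinates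
  set a : ℤ → ℤ → ℂ := fun m n => u (m + n, m - n) with ha_def
  have ha : ∀ m : ℤ, Summable fun n => ‖a m n‖ ^ 2 := by
    intro m
    have hinj : Function.Injective fun n : ℤ => ((m + n, m - n) : ℤ × ℤ) := by
      intro n₁ n₂ h
      simp only [Prod.mk.injEq] at h
      omega
    exact hs2.comp_injective hinj
  -- summability of the row norms
  have hprod : Summable fun p : ℤ × ℤ => ‖a p.1 p.2‖ ^ 2 := by
    have hinj : Function.Injective fun p : ℤ × ℤ => ((p.1 + p.2, p.1 - p.2) : ℤ × ℤ) := by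
      intro p q h
      simp only [Prod.mk.injEq] at h
      obtain ⟨h1, h2⟩ := h
      refine Prod.ext ?_ ?_ <;> omega
    exact hs2.comp_injective hinj
  have hNsum : Summable fun m : ℤ => Nq (a m) := by
    have h0 : 0 ≤ fun p : ℤ × ℤ => ‖a p.1 p.2‖ ^ 2 := fun p => by positivity
    exact ((summable_prod_of_nonneg h0).1 hprod).2
  have hNtop : Tendsto (fun m : ℤ => Nq (a m)) atTop (nhds 0) :=
    hNsum.tendsto_cofinite_zero.mono_left (Int.cofinite_eq ▸ le_sup_right)
  have hNbot : Tendsto (fun m : ℤ => Nq (a m)) atBot (nhds 0) :=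
    hNsum.tendsto_cofinite_zero.mono_left (Int.cofinite_eq ▸ le_sup_left)
  have pe : ∀ p q r s : ℤ, p = r → q = s → u (p, q) = u (r, s) := by
    intro p q r s hp hq; rw [hp, hq]
  have heqn : ∀ m n : ℤ,
      a (m + 1) (n + 1) - I * a (m + 1) n + a m n - I * a m (n + 1) = 0 := by
    have hsub : ∀ s t : ℤ, Summable fun j : FCLat => ‖u (j.1.1 + s, j.1.2 + t)‖ ^ 2 := by
      intro s t
      have hinj : Function.Injective fun j : FCLat => ((j.1.1 + s, j.1.2 + t) : ℤ × ℤ) := by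
        intro j k h
        simp only [Prod.mk.injEq] at h
        apply Subtype.ext
        apply Prod.ext <;> omega
      exact hs2.comp_injective hinj
    have hdle : (1 : ℝ) ≤ ‖((2 : ℂ) * (Real.sqrt 2 : ℝ))‖ := by
      rw [norm_mul, Complex.norm_ofNat, Complex.norm_real, Real.norm_eq_abs,
        _root_.abs_of_nonneg (Real.sqrt_nonneg 2)]
      nlinarith [Real.sq_sqrt (by norm_num : (0:ℝ) ≤ 2), Real.sqrt_nonneg 2]
    have hFle : ∀ j : FCLat,
        ‖(u (j.1.1 + 2, j.1.2) - Complex.I * u (j.1.1 + 1, j.1.2 + 1)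
            + u j.1 - Complex.I * u (j.1.1 + 1, j.1.2 - 1)) / (2 * Real.sqrt 2)‖ ^ 2
          ≤ 4 * ‖u (j.1.1 + 2, j.1.2 + 0)‖ ^ 2 + 4 * ‖u (j.1.1 + 1, j.1.2 + 1)‖ ^ 2
            + 4 * ‖u (j.1.1 + 0, j.1.2 + 0)‖ ^ 2 + 4 * ‖u (j.1.1 + 1, j.1.2 + (-1))‖ ^ 2 := by
      intro j
      set x := u (j.1.1 + 2, j.1.2) with hx
      set y := u (j.1.1 + 1, j.1.2 + 1) with hy
      set z := u j.1 with hz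
      set w := u (j.1.1 + 1, j.1.2 - 1) with hw
      have hnum : ‖x - Complex.I * y + z - Complex.I * w‖ ≤ ‖x‖ + ‖y‖ + ‖z‖ + ‖w‖ := by
        calc ‖x - Complex.I * y + z - Complex.I * w‖
            ≤ ‖x - Complex.I * y + z‖ + ‖Complex.I * w‖ := norm_sub_le _ _
          _ ≤ ‖x - Complex.I * y‖ + ‖z‖ + ‖Complex.I * w‖ := by
              have := norm_add_le (x - Complex.I * y) z; linarith
          _ ≤ ‖x‖ + ‖Complex.I * y‖ + ‖z‖ + ‖Complex.I * w‖ := by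
              have := norm_sub_le x (Complex.I * y); linarith
          _ = ‖x‖ + ‖y‖ + ‖z‖ + ‖w‖ := by
              rw [norm_mul, norm_mul, Complex.norm_I, one_mul, one_mul]
      have hdiv : ‖(x - Complex.I * y + z - Complex.I * w) / (2 * Real.sqrt 2)‖
          ≤ ‖x - Complex.I * y + z - Complex.I * w‖ := by
        rw [norm_div]
        calc ‖x - Complex.I * y + z - Complex.I * w‖ / ‖((2:ℂ) * (Real.sqrt 2 : ℝ))‖
            ≤ ‖x - Complex.I * y + z - Complex.I * w‖ / 1 := by
              apply div_le_div_of_nonneg_left ?_ ?_ hdle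
              · exact norm_nonneg _
              · norm_num
          _ = ‖x - Complex.I * y + z - Complex.I * w‖ := by rw [div_one]
      have hx0 : u (j.1.1 + 2, j.1.2 + 0) = x := by rw [hx]; exact pe _ _ _ _ rfl (by ring)
      have hz0 : u (j.1.1 + 0, j.1.2 + 0) = z := by
        rw [hz]
        have : ((j.1.1 + 0, j.1.2 + 0) : ℤ × ℤ) = j.1 := by
          refine Prod.ext ?_ ?_ <;> simp
        rw [this]
      have hw0 : u (j.1.1 + 1, j.1.2 + (-1)) = w := by rw [hw]; exact pe _ _ _ _ rfl (by ring)
      rw [hx0, hz0, hw0]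
      have h1 : ‖(x - Complex.I * y + z - Complex.I * w) / (2 * Real.sqrt 2)‖
          ≤ ‖x‖ + ‖y‖ + ‖z‖ + ‖w‖ := hdiv.trans hnum
      have h2 : (0:ℝ) ≤ ‖(x - Complex.I * y + z - Complex.I * w) / (2 * Real.sqrt 2)‖ :=
        norm_nonneg _
      nlinarith [norm_nonneg x, norm_nonneg y, norm_nonneg z, norm_nonneg w,
        sq_nonneg (‖x‖ - ‖y‖), sq_nonneg (‖x‖ - ‖z‖), sq_nonneg (‖x‖ - ‖w‖),
        sq_nonneg (‖y‖ - ‖z‖), sq_nonneg (‖y‖ - ‖w‖), sq_nonneg (‖z‖ - ‖w‖)]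
    have hFsum : Summable fun j : FCLat =>
        ‖(u (j.1.1 + 2, j.1.2) - Complex.I * u (j.1.1 + 1, j.1.2 + 1)
            + u j.1 - Complex.I * u (j.1.1 + 1, j.1.2 - 1)) / (2 * Real.sqrt 2)‖ ^ 2 := by
      refine Summable.of_nonneg_of_le (fun j => by positivity) hFle ?_
      exact ((((hsub 2 0).mul_left 4).add ((hsub 1 1).mul_left 4)).add
        ((hsub 0 0).mul_left 4)).add ((hsub 1 (-1)).mul_left 4)
    have hF0 : ∀ j : FCLat,
        ‖(u (j.1.1 + 2, j.1.2) - Complex.I * u (j.1.1 + 1, j.1.2 + 1)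
            + u j.1 - Complex.I * u (j.1.1 + 1, j.1.2 - 1)) / (2 * Real.sqrt 2)‖ ^ 2 = 0 := by
      intro j
      have hle := Summable.le_tsum hFsum j (fun b _ => by positivity)
      rw [hnorm] at hle
      have : (0:ℝ) ≤ ‖(u (j.1.1 + 2, j.1.2) - Complex.I * u (j.1.1 + 1, j.1.2 + 1)
          + u j.1 - Complex.I * u (j.1.1 + 1, j.1.2 - 1)) / (2 * Real.sqrt 2)‖ ^ 2 := by positivity
      linarith
    have hnum0 : ∀ j : FCLat,
        u (j.1.1 + 2, j.1.2) - Complex.I * u (j.1.1 + 1, j.1.2 + 1)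
          + u j.1 - Complex.I * u (j.1.1 + 1, j.1.2 - 1) = 0 := by
      intro j
      have h := hF0 j
      have h1 : ‖(u (j.1.1 + 2, j.1.2) - Complex.I * u (j.1.1 + 1, j.1.2 + 1)
          + u j.1 - Complex.I * u (j.1.1 + 1, j.1.2 - 1)) / (2 * Real.sqrt 2)‖ = 0 := by
        nlinarith [norm_nonneg ((u (j.1.1 + 2, j.1.2) - Complex.I * u (j.1.1 + 1, j.1.2 + 1)
          + u j.1 - Complex.I * u (j.1.1 + 1, j.1.2 - 1)) / (2 * Real.sqrt 2))]
      have h2 := norm_eq_zero.1 h1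
      have hd : ((2:ℂ) * (Real.sqrt 2 : ℝ)) ≠ 0 := by
        intro hc
        rw [hc] at hdle
        simp at hdle
        linarith
      rcases div_eq_zero_iff.1 h2 with h3 | h3
      · exact h3
      · exact absurd h3 hd
    intro m n
    have h := hnum0 ⟨(m + n, m - n), ⟨m, by ring⟩⟩
    have h' : u (m + n + 2, m - n) - I * u (m + n + 1, m - n + 1)
        + u (m + n, m - n) - I * u (m + n + 1, m - n - 1) = 0 := h
    simp only [ha_def]
    rw [pe (m + 1 + (n + 1)) (m + 1 - (n + 1)) (m + n + 2) (m - n) (by ring) (by ring),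
      pe (m + 1 + n) (m + 1 - n) (m + n + 1) (m - n + 1) (by ring) (by ring),
      pe (m + (n + 1)) (m - (n + 1)) (m + n + 1) (m - n - 1) (by ring) (by ring)]
    exact h'
  -- the key quantities
  set J : ℤ → ℝ := fun m => (c1 (a m)).im with hJ_def
  set K : ℤ → ℝ := fun m => (c2 (a m)).re with hK_def
  have hkey : ∀ m : ℤ,
      2 * J (m + 1) + K (m + 1) - Nq (a (m + 1)) = 2 * J m - K m + Nq (a m) := by
    intro m
    exact key (ha m) (ha (m + 1)) (fun n => heqn m n)
  have hJle : ∀ m : ℤ, |J m| ≤ Nq (a m) := fun m =>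
    (Complex.abs_im_le_norm _).trans (norm_c_le (ha m) 1)
  have hKle : ∀ m : ℤ, |K m| ≤ Nq (a m) := fun m =>
    (Complex.abs_re_le_norm _).trans (norm_c_le (ha m) 2)
  have hmono : Monotone J := by
    refine monotone_int_of_le_succ fun m => ?_
    have h := hkey m
    have h1 := abs_le.1 (hKle m)
    have h2 := abs_le.1 (hKle (m + 1))
    linarith
  have hJtop : Tendsto J atTop (nhds 0) :=
    squeeze_zero_norm (fun m => hJle m) hNtop
  have hJbot : Tendsto J atBot (nhds 0) :=
    squeeze_zero_norm (fun m => hJle m) hNbot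
  have hJ0 : ∀ m : ℤ, J m = 0 := by
    intro m
    have hle : J m ≤ 0 := by
      refine ge_of_tendsto hJtop ?_
      exact eventually_atTop.2 ⟨m, fun k hk => hmono hk⟩
    have hge : 0 ≤ J m := by
      refine le_of_tendsto hJbot ?_
      exact eventually_atBot.2 ⟨m, fun k hk => hmono hk⟩
    linarith
  have hNK : ∀ m : ℤ, Nq (a m) = K m := by
    intro m
    have h := hkey m
    rw [hJ0 m, hJ0 (m + 1)] at h
    have h1 := abs_le.1 (hKle m)
    have h2 := abs_le.1 (hKle (m + 1))
    linarith
  have hper : ∀ m n : ℤ, a m (n + 2) = a m n := by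
    intro m n
    have hxm := ha m
    have h2 := summable_shift hxm 2
    have hcm := summable_cm0 hxm 2
    have hre : Summable fun k : ℤ => ((starRingEnd ℂ) (a m k) * a m (k + 2)).re := by
      refine Summable.of_norm_bounded ((hxm.add h2).div_const 2) (fun k => ?_)
      rw [Real.norm_eq_abs]
      refine (Complex.abs_re_le_norm _).trans ?_
      have := norm_conj_mul_le (a m k) (a m (k + 2))
      exact this
    have hptw : ∀ x y : ℂ, ‖x - y‖ ^ 2
        = ‖x‖ ^ 2 + ‖y‖ ^ 2 - 2 * ((starRingEnd ℂ) x * y).re := by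
      intro x y
      have h1 := congrArg Complex.re (conj_mul_self (x - y))
      simp only [map_sub, sub_mul, mul_sub, Complex.sub_re, Complex.ofReal_re] at h1
      have hx := congrArg Complex.re (conj_mul_self x)
      have hy := congrArg Complex.re (conj_mul_self y)
      simp only [Complex.ofReal_re] at hx hy
      have hyx : ((starRingEnd ℂ) y * x).re = ((starRingEnd ℂ) x * y).re := by
        have e : (starRingEnd ℂ) ((starRingEnd ℂ) y * x) = (starRingEnd ℂ) x * y := by
          rw [map_mul, Complex.conj_conj]; ring
        rw [← e, Complex.conj_re]
      linarith
    have hs : Summable fun k : ℤ => ‖a m k‖ ^ 2 + ‖a m (k + 2)‖ ^ 2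
        - 2 * ((starRingEnd ℂ) (a m k) * a m (k + 2)).re :=
      (hxm.add h2).sub (hre.mul_left 2)
    have hsable : Summable fun k : ℤ => ‖a m k - a m (k + 2)‖ ^ 2 :=
      hs.congr fun k => (hptw _ _).symm
    have hsum0 : ∑' k : ℤ, ‖a m k - a m (k + 2)‖ ^ 2 = 0 := by
      have e1 : ∑' k : ℤ, ‖a m k - a m (k + 2)‖ ^ 2
          = ∑' k : ℤ, (‖a m k‖ ^ 2 + ‖a m (k + 2)‖ ^ 2
            - 2 * ((starRingEnd ℂ) (a m k) * a m (k + 2)).re) :=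
        tsum_congr fun k => hptw _ _
      rw [e1, Summable.tsum_sub (hxm.add h2) (hre.mul_left 2), Summable.tsum_add hxm h2, tsum_mul_left]
      have e2 : ∑' k : ℤ, ‖a m (k + 2)‖ ^ 2 = Nq (a m) :=
        tsum_shiftR (fun k => ‖a m k‖ ^ 2) 2
      have e3 : ∑' k : ℤ, ((starRingEnd ℂ) (a m k) * a m (k + 2)).re = K m := by
        rw [← Complex.re_tsum hcm]
        rfl
      rw [e2, e3]
      have h4 := hNK m
      have : ∑' k : ℤ, ‖a m k‖ ^ 2 = Nq (a m) := rfl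
      rw [this]
      linarith
    have hk : ‖a m n - a m (n + 2)‖ ^ 2 = 0 := by
      have hle := Summable.le_tsum hsable n (fun b _ => by positivity)
      rw [hsum0] at hle
      have : (0:ℝ) ≤ ‖a m n - a m (n + 2)‖ ^ 2 := by positivity
      linarith
    have h5 : ‖a m n - a m (n + 2)‖ = 0 := by
      nlinarith [norm_nonneg (a m n - a m (n + 2))]
    exact (sub_eq_zero.1 (norm_eq_zero.1 h5)).symm
  -- each diagonal vanishes
  have hzero_a : ∀ m n : ℤ, a m n = 0 := by
    intro m n
    have hrep : ∀ k : ℕ, a m (n + 2 * (k : ℤ)) = a m n := by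
      intro k
      induction k with
      | zero => simp
      | succ k ih =>
          have : n + 2 * ((k : ℤ) + 1) = (n + 2 * (k : ℤ)) + 2 := by ring
          rw [Nat.cast_succ, this, hper, ih]
    have hinj : Function.Injective fun k : ℕ => n + 2 * (k : ℤ) := by
      intro k₁ k₂ h
      simp only at h
      omega
    have hsum : Summable fun k : ℕ => ‖a m (n + 2 * (k : ℤ))‖ ^ 2 :=
      (ha m).comp_injective hinj
    have hconst : Summable fun _ : ℕ => ‖a m n‖ ^ 2 := by
      refine hsum.congr fun k => ?_
      rw [hrep k]
    have h0 : ‖a m n‖ ^ 2 = 0 := by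
      by_contra hne
      exact hne ((summable_const_iff _).1 hconst)
    have : ‖a m n‖ = 0 := by
      nlinarith [norm_nonneg (a m n)]
    exact norm_eq_zero.1 this
  -- conclude
  funext j
  rcases Classical.em (Even (j.1 + j.2)) with he | he
  · obtain ⟨r, hr⟩ := he
    have h := hzero_a r (j.1 - r)
    have h1 : r + (j.1 - r) = j.1 := by ring
    have h2 : r - (j.1 - r) = j.2 := by omega
    simp only [ha_def, h1, h2] at h
    simpa using h
  · simpa using hvan j he
end
end

section
/- Growth factor modulus: for the (2+1)D scheme with constant real m and V, Δ_x = Δ_y = Δ, c = ħ = 1, and CFL ratio Δt/Δ ≤ 1/√2, both eigenvalues λ± of the amplification matrix G = S⁻¹S* have |λ±| = 1 for all real wave vectors (k_x, k_y), where S = [[1/Δt − (m+V)/i, 0],[(2i/Δ)sin(k_xΔ/2) + i(2i/Δ)sin(k_yΔ/2), 1/Δt + (m−V)/i]]. -/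
noncomputable section
open Complex Real Matrix

section AuxLemmas
open Polynomial

lemma aux_ineq (t m V B : ℝ) (ht : 0 < t) (hB0 : 0 ≤ B) (hB : B ≤ 4*t) :
    (2*(t - m^2 + V^2) - B)^2 ≤ 4*((t + (m+V)^2)*(t + (m-V)^2)) := by
  nlinarith [mul_nonneg hB0 (sub_nonneg.2 hB), mul_nonneg (sq_nonneg m) (sub_nonneg.2 hB),
    mul_nonneg hB0 (sq_nonneg V), mul_nonneg ht.le (sq_nonneg m)]

lemma aux_unit (c : ℝ) (hc : c^2 ≤ 4) (μ : ℂ) (h : μ^2 - (c:ℂ)*μ + 1 = 0) :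
    ‖μ‖ = 1 := by
  rw [Complex.ext_iff] at h
  simp only [Complex.add_re, Complex.add_im, Complex.sub_re, Complex.sub_im, Complex.mul_re,
    Complex.mul_im, Complex.ofReal_re, Complex.ofReal_im, Complex.one_re, Complex.one_im,
    Complex.zero_re, Complex.zero_im, pow_two] at h
  obtain ⟨h1, h2⟩ := h
  have key : μ.re^2 + μ.im^2 = 1 := by
    rcases mul_eq_zero.1 (show μ.im * (2*μ.re - c) = 0 by linarith) with hy | hx
    · have h4 : (2*μ.re - c)^2 + (4 - c^2) = 0 := by
        linear_combination 4*h1 + 4*μ.im*hy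
      have h6 : (2*μ.re - c)^2 = 0 := le_antisymm (by linarith) (sq_nonneg _)
      have h5 : 2*μ.re - c = 0 := by
        exact pow_eq_zero_iff (two_ne_zero) |>.mp h6
      linear_combination -h1 + μ.re*h5
    · linear_combination -h1 + μ.re*hx
  have h7 : ‖μ‖ ^ 2 = 1 := by
    rw [Complex.sq_norm, Complex.normSq_apply]; nlinarith
  nlinarith [norm_nonneg μ]

lemma aux_main (D : ℂ) (E : ℝ) (hD : D ≠ 0) (hE : E^2 ≤ 4 * Complex.normSq D) (lam : ℂ)
    (h : D * lam^2 - (E:ℂ) * lam + (starRingEnd ℂ) D = 0) : ‖lam‖ = 1 := by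
  set r : ℝ := ‖D‖ with hr
  have hrpos : 0 < r := norm_pos_iff.mpr hD
  have hrC : (r:ℂ) ≠ 0 := by exact_mod_cast hrpos.ne'
  have hDr : D * (starRingEnd ℂ) D = (r:ℂ)^2 := by
    rw [Complex.mul_conj]; rw [hr]; norm_cast; rw [Complex.sq_norm]
  have h2 : (lam*D)^2 - (E:ℂ)*(lam*D) + (r:ℂ)^2 = 0 := by linear_combination D*h - hDr
  have hμ : (lam * D / r)^2 - ((E/r : ℝ):ℂ) * (lam * D / r) + 1 = 0 := by
    push_cast
    field_simp
    linear_combination h2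
  have hc : (E/r)^2 ≤ 4 := by
    rw [div_pow, div_le_iff₀ (by positivity)]
    have hrs : r^2 = Complex.normSq D := by rw [hr, Complex.sq_norm]
    nlinarith
  have hfin := aux_unit (E/r) hc _ hμ
  rw [norm_div, norm_mul] at hfin
  simp only [Complex.norm_real, Real.norm_eq_abs, abs_of_pos hrpos, ← hr] at hfin
  field_simp at hfin
  exact hfin

lemma eval_charpoly_fin_two (M : Matrix (Fin 2) (Fin 2) ℂ) (x : ℂ) :
    Polynomial.eval x M.charpoly = (x - M 0 0) * (x - M 1 1) - M 0 1 * M 1 0 := by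
  rw [Matrix.charpoly, Matrix.det_fin_two]
  rw [Matrix.charmatrix_apply_eq, Matrix.charmatrix_apply_eq,
    Matrix.charmatrix_apply_ne _ _ _ (by decide), Matrix.charmatrix_apply_ne _ _ _ (by decide)]
  simp

lemma main_aux (a b d : ℂ) (ha : a ≠ 0) (hd : d ≠ 0) (Er : ℝ)
    (hE : d * (starRingEnd ℂ) a + a * (starRingEnd ℂ) d - b * (starRingEnd ℂ) b = (Er:ℂ))
    (hnorm : Er^2 ≤ 4 * Complex.normSq (a*d)) (lam : ℂ)
    (hroot : (Matrix.charpoly ((!![a,0;b,d])⁻¹ * (!![a,0;b,d])ᴴ)).IsRoot lam) :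
    ‖lam‖ = 1 := by
  have hD : a * d ≠ 0 := mul_ne_zero ha hd
  have hdet : (!![a,0;b,d] : Matrix (Fin 2) (Fin 2) ℂ).det = a*d := by
    simp [Matrix.det_fin_two_of]
  haveI : Invertible (!![a,0;b,d] : Matrix (Fin 2) (Fin 2) ℂ) :=
    Matrix.invertibleOfIsUnitDet _ (by rw [hdet]; exact hD.isUnit)
  have hG : (!![a,0;b,d] : Matrix (Fin 2) (Fin 2) ℂ)⁻¹ * (!![a,0;b,d])ᴴ =
      !![d * star a / (a*d), d * star b / (a*d);
         -(b * star a)/(a*d), (a * star d - b * star b)/(a*d)] := by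
    rw [Matrix.inv_mul_eq_iff_eq_mul_of_invertible]
    ext i j
    fin_cases i <;> fin_cases j <;>
      simp [Matrix.mul_apply, Fin.sum_univ_two, Matrix.conjTranspose_apply] <;>
      field_simp <;> ring
  rw [hG, Polynomial.IsRoot, eval_charpoly_fin_two] at hroot
  norm_num [Matrix.cons_val_zero, Matrix.cons_val_one, Matrix.head_cons] at hroot
  apply aux_main (a*d) Er hD hnorm lam
  field_simp at hroot
  have hkey : (a*d) * ((a*d) * lam^2 - (Er:ℂ)*lam + (starRingEnd ℂ) (a*d)) = 0 := by
    rw [_root_.map_mul]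
    linear_combination d*hroot + (a*d)*lam*hE
  rcases mul_eq_zero.mp hkey with h|h
  · exact absurd h hD
  · exact h

end AuxLemmas

/-- Growth factor modulus for the (2+1)D staggered scheme (constant real `m`, `V`,
`Δ_x = Δ_y = Δ`, `c = ħ = 1`): with CFL ratio `Δt/Δ ≤ 1/√2`, both eigenvalues of the
amplification matrix `G = S⁻¹S*` lie on the unit circle for all real wave vectors. -/
theorem stmt_16 (m V Δt Δ kx ky : ℝ) (hΔt : 0 < Δt) (hΔ : 0 < Δ)
    (hCFL : Δt / Δ ≤ 1 / Real.sqrt 2) :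
    ∀ lam : ℂ,
      (Matrix.charpoly
        ((!![(1 / Δt : ℂ) - ((m : ℂ) + V) / Complex.I, 0;
            (2 * Complex.I / Δ) * Real.sin (kx * Δ / 2)
              + Complex.I * ((2 * Complex.I / Δ) * Real.sin (ky * Δ / 2)),
            (1 / Δt : ℂ) + ((m : ℂ) - V) / Complex.I])⁻¹
          * (!![(1 / Δt : ℂ) - ((m : ℂ) + V) / Complex.I, 0;
            (2 * Complex.I / Δ) * Real.sin (kx * Δ / 2)
              + Complex.I * ((2 * Complex.I / Δ) * Real.sin (ky * Δ / 2)),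
            (1 / Δt : ℂ) + ((m : ℂ) - V) / Complex.I])ᴴ)).IsRoot lam →
      ‖lam‖ = 1 := by
  intro lam hroot
  set sx : ℝ := Real.sin (kx * Δ / 2) with hsx_def
  set sy : ℝ := Real.sin (ky * Δ / 2) with hsy_def
  -- nice forms of the entries
  have ha2 : (1 / Δt : ℂ) - ((m : ℂ) + V) / Complex.I
      = ((1/Δt : ℝ) : ℂ) + (((m + V : ℝ)) : ℂ) * Complex.I := by
    rw [div_eq_mul_inv _ Complex.I, Complex.inv_I]
    push_cast
    ring
  have hd2 : (1 / Δt : ℂ) + ((m : ℂ) - V) / Complex.I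
      = ((1/Δt : ℝ) : ℂ) - (((m - V : ℝ)) : ℂ) * Complex.I := by
    rw [div_eq_mul_inv _ Complex.I, Complex.inv_I]
    push_cast
    ring
  have hb2 : (2 * Complex.I / Δ) * (sx:ℂ) + Complex.I * ((2 * Complex.I / Δ) * (sy:ℂ))
      = ((-(2*sy/Δ) : ℝ) : ℂ) + (((2*sx/Δ) : ℝ) : ℂ) * Complex.I := by
    push_cast
    linear_combination (2*(sy:ℂ)/(Δ:ℂ)) * Complex.I_sq
  have ha : (1 / Δt : ℂ) - ((m : ℂ) + V) / Complex.I ≠ 0 := by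
    rw [ha2]
    intro hcon
    have h1 := congrArg Complex.re hcon
    simp at h1
    exact hΔt.ne' h1
  have hd : (1 / Δt : ℂ) + ((m : ℂ) - V) / Complex.I ≠ 0 := by
    rw [hd2]
    intro hcon
    have h1 := congrArg Complex.re hcon
    simp at h1
    exact hΔt.ne' h1
  refine main_aux _ _ _ ha hd
    (2*((1/Δt)^2 - m^2 + V^2) - 4/Δ^2*(sx^2 + sy^2)) ?_ ?_ lam hroot
  · -- hE
    rw [ha2, hd2, hb2]
    simp only [_root_.map_add, _root_.map_sub, _root_.map_mul, _root_.map_neg, map_div₀,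
      _root_.map_one, _root_.map_ofNat, Complex.conj_I, Complex.conj_ofReal]
    push_cast
    linear_combination (2*((m:ℂ)+V)*((m:ℂ)-V) + (2*(sx:ℂ)/(Δ:ℂ))^2) * Complex.I_sq
  · -- hnorm
    have hnormsq : Complex.normSq
        (((1 / Δt : ℂ) - ((m : ℂ) + V) / Complex.I) * ((1 / Δt : ℂ) + ((m : ℂ) - V) / Complex.I))
        = ((1/Δt)^2 + (m+V)^2) * ((1/Δt)^2 + (m-V)^2) := by
      rw [Complex.normSq_mul, ha2, hd2]
      simp [Complex.normSq_apply]
      ring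
    rw [hnormsq]
    have hΔΔ : 2 * Δt^2 ≤ Δ^2 := by
      have h2 : Δt * Real.sqrt 2 ≤ 1 * Δ := by
        rw [div_le_div_iff₀ hΔ (by positivity)] at hCFL
        exact hCFL
      have h3 := mul_le_mul h2 h2 (by positivity) (by positivity)
      have h4 : Real.sqrt 2 ^ 2 = 2 := Real.sq_sqrt (by norm_num)
      nlinarith [h3, h4]
    have hB0 : (0:ℝ) ≤ 4/Δ^2*(sx^2 + sy^2) := by positivity
    have hB : 4/Δ^2*(sx^2 + sy^2) ≤ 4 * (1/Δt)^2 := by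
      have e1 : 4/Δ^2*(sx^2 + sy^2) ≤ 4/Δ^2 * 2 := by
        have hsx : sx^2 ≤ 1 := Real.sin_sq_le_one _
        have hsy : sy^2 ≤ 1 := Real.sin_sq_le_one _
        exact mul_le_mul_of_nonneg_left (by linarith) (by positivity)
      have e2 : 4/Δ^2 * 2 ≤ 4 * (1/Δt)^2 := by
        rw [show (4:ℝ) * (1/Δt)^2 = 4/Δt^2 by ring, div_mul_eq_mul_div,
          div_le_div_iff₀ (by positivity) (by positivity)]
        nlinarith
      linarith
    exact aux_ineq ((1/Δt)^2) m V _ (by positivity) hB0 hB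
end
end
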